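/- For n ≥ 3 and 1 < k < n, |P_{n,k}| = (cos(π/n) + sin(π/n)·cot((k-1)π/n)) · φ_{n,k} = ∫₀^∞ (1 + t^n)^{-k/n} dt, where the middle expression is positive for 1 < k < n. -/

import Mathlib

open MeasureTheory Set Real

lemma betaIoo {a b : ℝ} (ha : 0 < a) (hb : 0 < b) :
    ∫ x in Ioo (0:ℝ) 1, x ^ (a-1) * (1-x) ^ (b-1) =
      Real.Gamma a * Real.Gamma b / Real.Gamma (a+b) := by
  have key : Complex.betaIntegral a b =
      ((∫ x in Ioo (0:ℝ) 1, x ^ (a-1) * (1-x) ^ (b-1) : ℝ) : ℂ) := by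
    rw [Complex.betaIntegral, intervalIntegral.integral_of_le zero_le_one,
      MeasureTheory.integral_Ioc_eq_integral_Ioo]
    have hcoe : ((∫ x in Ioo (0:ℝ) 1, x ^ (a-1) * (1-x) ^ (b-1) : ℝ) : ℂ)
        = ∫ x in Ioo (0:ℝ) 1, ((x ^ (a-1) * (1-x) ^ (b-1) : ℝ) : ℂ) := integral_ofReal.symm
    rw [hcoe]
    refine setIntegral_congr_fun measurableSet_Ioo fun x hx => ?_
    have hx0 : (0:ℝ) < x := hx.1
    have hx1 : (0:ℝ) < 1 - x := by linarith [hx.2]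
    push_cast [Complex.ofReal_cpow hx0.le, Complex.ofReal_cpow hx1.le]
    ring
  have h := Complex.Gamma_mul_Gamma_eq_betaIntegral
      (s := (a:ℂ)) (t := (b:ℂ)) (by simpa using ha) (by simpa using hb)
  rw [key, ← Complex.ofReal_add, Complex.Gamma_ofReal, Complex.Gamma_ofReal,
    Complex.Gamma_ofReal, ← Complex.ofReal_mul, ← Complex.ofReal_mul] at h
  have h' := Complex.ofReal_inj.mp h
  have hab : Real.Gamma (a+b) ≠ 0 := (Real.Gamma_pos_of_pos (by linarith)).ne'
  field_simp
  linarith [h']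

lemma aux_pt {N : ℝ} (hN : 0 < N) {x : ℝ} (hx : 0 < x) :
    x ^ (N - 1) * (x ^ N) ^ (1/N - 1) = 1 := by
  rw [← Real.rpow_mul hx.le, ← Real.rpow_add hx,
    show N - 1 + N * (1/N - 1) = 0 by field_simp; ring, Real.rpow_zero]

lemma himg_pow {N : ℝ} (hN : 0 < N) : (fun x : ℝ => x ^ N) '' Ioo 0 1 = Ioo 0 1 := by
  ext y
  simp only [mem_image, mem_Ioo]
  constructor
  · rintro ⟨x, ⟨hx0, hx1⟩, rfl⟩
    exact ⟨Real.rpow_pos_of_pos hx0 N, Real.rpow_lt_one hx0.le hx1 hN⟩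
  · rintro ⟨hy0, hy1⟩
    refine ⟨y ^ N⁻¹, ⟨Real.rpow_pos_of_pos hy0 _, Real.rpow_lt_one hy0.le hy1 (by positivity)⟩, ?_⟩
    rw [← Real.rpow_mul hy0.le, inv_mul_cancel₀ hN.ne', Real.rpow_one]

lemma hderiv_pow {N : ℝ} {s : Set ℝ} (hs : s ⊆ Ioi 0) :
    ∀ x ∈ s, HasDerivWithinAt (fun t : ℝ => t ^ N) (N * x ^ (N - 1)) s x :=
  fun x hx => (Real.hasDerivAt_rpow_const (Or.inl (hs hx).ne')).hasDerivWithinAt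

lemma hinj_pow {N : ℝ} (hN : 0 < N) {s : Set ℝ} (hs : s ⊆ Ioi 0) :
    InjOn (fun t : ℝ => t ^ N) s :=
  fun x hx y hy h => Real.rpow_left_injOn hN.ne' (le_of_lt (hs hx) : (0:ℝ) ≤ x) (le_of_lt (hs hy) : (0:ℝ) ≤ y) h

lemma subA {N : ℝ} (hN : 0 < N) (c : ℝ) :
    ∫ x in Ioo (0:ℝ) 1, x ^ (1/N - 1) * (1 - x) ^ c =
      N * ∫ x in Ioo (0:ℝ) 1, (1 - x ^ N) ^ c := by
  have hsub : Ioo (0:ℝ) 1 ⊆ Ioi 0 := fun x hx => hx.1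
  have h := integral_image_eq_integral_abs_deriv_smul (s := Ioo (0:ℝ) 1) measurableSet_Ioo
      (hderiv_pow (N := N) hsub) (hinj_pow hN hsub)
      (fun u => u ^ (1/N - 1) * (1 - u) ^ c)
  rw [himg_pow hN] at h
  rw [h, ← integral_const_mul]
  refine setIntegral_congr_fun measurableSet_Ioo fun x hx => ?_
  have hx0 : (0:ℝ) < x := hx.1
  have key := aux_pt hN hx0
  rw [smul_eq_mul, abs_of_pos (by positivity)]
  calc N * x ^ (N-1) * ((x ^ N) ^ (1/N - 1) * (1 - x ^ N) ^ c)
      = N * ((x ^ (N-1) * (x ^ N) ^ (1/N - 1)) * (1 - x ^ N) ^ c) := by ring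
    _ = N * (1 - x ^ N) ^ c := by rw [key, one_mul]

lemma subB {N : ℝ} (hN : 0 < N) (c : ℝ) :
    ∫ u in Ioi (0:ℝ), u ^ (1/N - 1) * (1 + u) ^ c =
      N * ∫ t in Ioi (0:ℝ), (1 + t ^ N) ^ c := by
  rw [← integral_comp_rpow_Ioi_of_pos (g := fun u => u ^ (1/N - 1) * (1 + u) ^ c) hN,
    ← integral_const_mul]
  refine setIntegral_congr_fun measurableSet_Ioi fun x hx => ?_
  have hx0 : (0:ℝ) < x := hx
  have key := aux_pt hN hx0
  rw [smul_eq_mul]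
  calc N * x ^ (N-1) * ((x ^ N) ^ (1/N - 1) * (1 + x ^ N) ^ c)
      = N * ((x ^ (N-1) * (x ^ N) ^ (1/N - 1)) * (1 + x ^ N) ^ c) := by ring
    _ = N * (1 + x ^ N) ^ c := by rw [key, one_mul]

lemma subC (a c : ℝ) :
    ∫ u in Ioi (0:ℝ), u ^ (a - 1) * (1 + u) ^ (-(a + c)) =
      ∫ s in Ioo (0:ℝ) 1, s ^ (a - 1) * (1 - s) ^ (c - 1) := by
  have himg : (fun s : ℝ => s / (1 - s)) '' Ioo 0 1 = Ioi 0 := by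
    ext y
    simp only [mem_image, mem_Ioo, mem_Ioi]
    constructor
    · rintro ⟨s, ⟨h0, h1⟩, rfl⟩
      exact div_pos h0 (by linarith)
    · intro hy
      refine ⟨y / (1 + y), ⟨div_pos hy (by linarith), (div_lt_one (by linarith)).2 (by linarith)⟩, ?_⟩
      have h1y : (1:ℝ) + y ≠ 0 := by positivity
      field_simp; ring
  have hderiv : ∀ s ∈ Ioo (0:ℝ) 1,
      HasDerivWithinAt (fun s : ℝ => s / (1 - s)) (((1 - s) ^ 2)⁻¹) (Ioo 0 1) s := by
    intro s hs
    have h1 : (1:ℝ) - s ≠ 0 := by have := hs.2; intro h; nlinarith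
    have hd := (hasDerivAt_id s).div ((hasDerivAt_id s).const_sub 1) h1
    refine hd.hasDerivWithinAt.congr_deriv ?_
    simp only [id_eq]; field_simp; ring
  have hinj : InjOn (fun s : ℝ => s / (1 - s)) (Ioo 0 1) := by
    intro x hx y hy h
    have hx1 : (0:ℝ) < 1 - x := by linarith [hx.2]
    have hy1 : (0:ℝ) < 1 - y := by linarith [hy.2]
    simp only at h
    field_simp at h
    linarith
  have h := integral_image_eq_integral_abs_deriv_smul measurableSet_Ioo hderiv hinj
      (fun u => u ^ (a - 1) * (1 + u) ^ (-(a + c)))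
  rw [himg] at h
  rw [h]
  refine setIntegral_congr_fun measurableSet_Ioo fun s hs => ?_
  have hs0 : (0:ℝ) < s := hs.1
  have hs1 : (0:ℝ) < 1 - s := by linarith [hs.2]
  have e1 : (1:ℝ) + s / (1 - s) = (1 - s)⁻¹ := by field_simp; ring
  have e1' : (((1:ℝ) - s) ^ 2)⁻¹ = (1 - s) ^ (-2:ℝ) := by
    rw [← Real.rpow_natCast (1 - s) 2, ← Real.rpow_neg hs1.le]
    norm_num
  have e2 : (s / (1 - s)) ^ (a - 1) = s ^ (a - 1) * (1 - s) ^ (1 - a) := by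
    rw [Real.div_rpow hs0.le hs1.le, div_eq_mul_inv, ← Real.rpow_neg hs1.le, neg_sub]
  have e3 : ((1:ℝ) + s / (1 - s)) ^ (-(a + c)) = (1 - s) ^ (a + c) := by
    rw [e1, Real.inv_rpow hs1.le, ← Real.rpow_neg hs1.le, neg_neg]
  rw [smul_eq_mul, abs_of_pos (by positivity)]
  calc (((1:ℝ) - s) ^ 2)⁻¹ * ((s / (1 - s)) ^ (a - 1) * (1 + s / (1 - s)) ^ (-(a + c)))
      = s ^ (a - 1) * ((1 - s) ^ (-2:ℝ) * (1 - s) ^ (1 - a) * (1 - s) ^ (a + c)) := by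
        rw [e1', e2, e3]; ring
    _ = s ^ (a - 1) * (1 - s) ^ (c - 1) := by
        rw [← Real.rpow_add hs1, ← Real.rpow_add hs1,
          show (-2:ℝ) + (1 - a) + (a + c) = c - 1 by ring]

theorem stmt_17 (n : ℕ) (hn : 3 ≤ n) (k : ℝ) (hk1 : 1 < k) (hkn : k < n)
    (φ : ℝ) (hφ : φ = ∫ x in (0:ℝ)..1, (1 - x ^ (n:ℝ)) ^ (-(k / n))) :
    0 < Real.cos (Real.pi / n) +
        Real.sin (Real.pi / n) * Real.cot ((k - 1) * Real.pi / n) ∧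
    (Real.cos (Real.pi / n) +
        Real.sin (Real.pi / n) * Real.cot ((k - 1) * Real.pi / n)) * φ =
      ∫ t in Set.Ioi (0:ℝ), (1 + t ^ (n:ℝ)) ^ (-(k / n)) := by
  set N : ℝ := (n : ℝ) with hNdef
  have hN3 : (3:ℝ) ≤ N := by rw [hNdef]; exact_mod_cast hn
  have hN : (0:ℝ) < N := by linarith
  have hkN : k < N := hkn
  -- trig computation
  have hθ0 : 0 < (k - 1) * Real.pi / N :=
    div_pos (mul_pos (by linarith) Real.pi_pos) hN
  have hθπ : (k - 1) * Real.pi / N < Real.pi := by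
    have hπ := Real.pi_pos
    rw [div_lt_iff₀ hN]
    nlinarith
  have hsθ : 0 < Real.sin ((k - 1) * Real.pi / N) := Real.sin_pos_of_pos_of_lt_pi hθ0 hθπ
  have hk0 : 0 < k * Real.pi / N := div_pos (mul_pos (by linarith) Real.pi_pos) hN
  have hkπ : k * Real.pi / N < Real.pi := by
    have hπ := Real.pi_pos
    rw [div_lt_iff₀ hN]
    nlinarith
  have hsk : 0 < Real.sin (k * Real.pi / N) := Real.sin_pos_of_pos_of_lt_pi hk0 hkπ
  have key : Real.cos (Real.pi / N) + Real.sin (Real.pi / N) * Real.cot ((k - 1) * Real.pi / N)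
      = Real.sin (k * Real.pi / N) / Real.sin ((k - 1) * Real.pi / N) := by
    rw [Real.cot_eq_cos_div_sin,
      show k * Real.pi / N = Real.pi / N + (k - 1) * Real.pi / N by ring, Real.sin_add]
    have hne : Real.sin (Real.pi * (k - 1) / N) ≠ 0 := by
      rw [show Real.pi * (k - 1) / N = (k - 1) * Real.pi / N by ring]; exact hsθ.ne'
    field_simp
    ring
  refine ⟨by rw [key]; exact div_pos hsk hsθ, ?_⟩
  rw [key]
  -- Gamma positivity
  have h1k : (0:ℝ) < 1 / N := by positivity
  have hu : (0:ℝ) < (k - 1) / N := div_pos (by linarith) hN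
  have hv : (0:ℝ) < 1 - k / N := by
    rw [sub_pos, div_lt_one hN]; exact hkN
  have hGa := Real.Gamma_pos_of_pos h1k
  have hGu := Real.Gamma_pos_of_pos hu
  have hGv := Real.Gamma_pos_of_pos hv
  have hGk : 0 < Real.Gamma (k / N) := Real.Gamma_pos_of_pos (div_pos (by linarith) hN)
  have hG1u : 0 < Real.Gamma (1 - (k - 1) / N) := by
    apply Real.Gamma_pos_of_pos
    rw [sub_pos, div_lt_one hN]; linarith
  -- φ in Beta form
  have hNφ : N * φ = Real.Gamma (1/N) * Real.Gamma (1 - k/N) / Real.Gamma (1 - (k-1)/N) := by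
    rw [hφ, intervalIntegral.integral_of_le zero_le_one,
      MeasureTheory.integral_Ioc_eq_integral_Ioo, ← subA hN (-(k/N)),
      show -(k/N) = (1 - k/N) - 1 by ring, betaIoo h1k hv,
      show 1/N + (1 - k/N) = 1 - (k-1)/N by ring]
  -- RHS integral in Beta form
  have hNI : N * (∫ t in Set.Ioi (0:ℝ), (1 + t ^ N) ^ (-(k / N)))
      = Real.Gamma (1/N) * Real.Gamma ((k-1)/N) / Real.Gamma (k/N) := by
    rw [← subB hN (-(k/N)), show -(k/N) = -(1/N + (k-1)/N) by ring, subC (1/N) ((k-1)/N),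
      betaIoo h1k hu, show 1/N + (k-1)/N = k/N by ring]
  -- reflection formula consequences
  have e1' : Real.sin ((k-1) * Real.pi / N) *
      (Real.Gamma ((k-1)/N) * Real.Gamma (1 - (k-1)/N)) = Real.pi := by
    rw [Real.Gamma_mul_Gamma_one_sub,
      show Real.pi * ((k-1)/N) = (k-1) * Real.pi / N by ring]
    field_simp
  have e2' : Real.sin (k * Real.pi / N) *
      (Real.Gamma (k/N) * Real.Gamma (1 - k/N)) = Real.pi := by
    rw [Real.Gamma_mul_Gamma_one_sub, show Real.pi * (k/N) = k * Real.pi / N by ring]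
    field_simp
  have hcross : Real.sin (k * Real.pi / N) *
        (Real.Gamma (1/N) * Real.Gamma (1 - k/N)) * Real.Gamma (k/N)
      = Real.sin ((k-1) * Real.pi / N) *
        (Real.Gamma (1/N) * Real.Gamma ((k-1)/N)) * Real.Gamma (1 - (k-1)/N) := by
    linear_combination Real.Gamma (1/N) * e2' - Real.Gamma (1/N) * e1'
  -- finish
  set G1 := Real.Gamma (1/N)
  set Gv := Real.Gamma (1 - k/N)
  set Gu := Real.Gamma ((k-1)/N)
  set Gk := Real.Gamma (k/N)
  set G1u := Real.Gamma (1 - (k-1)/N)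
  have hφ2 : φ = G1 * Gv / G1u / N := by
    rw [div_div, eq_div_iff (by positivity)]
    rw [eq_div_iff hG1u.ne'] at hNφ
    linear_combination hNφ
  have hI2 : (∫ t in Set.Ioi (0:ℝ), (1 + t ^ N) ^ (-(k / N))) = G1 * Gu / Gk / N := by
    rw [div_div, eq_div_iff (by positivity)]
    rw [eq_div_iff hGk.ne'] at hNI
    linear_combination hNI
  rw [hφ2, hI2]
  rw [div_div, div_div, div_mul_div_comm, div_eq_div_iff (by positivity) (by positivity)]
  linear_combination N * hcross
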